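/- Let A be a multiring and S ⊆ A a multiplicative subset with 1 ∈ S. Define a ~ b iff as = bt for some s,t ∈ S, let A/ₘS be the set of equivalence classes with operations ā + b̄ = {c̄ : cv ∈ as + bt for some s,t,v ∈ S}, -ā = (-a)‾, ā·b̄ = (ab)‾. Then A/ₘS is a multiring and the canonical projection π : A → A/ₘS is a multiring morphism. -/

import Mathlib

/-- A multiring structure (multivalued addition) on a carrier `R`. -/
structure MulRingOps (R : Type*) where
  add : R → R → Set R
  mul : R → R → R
  neg : R → R
  zero : R
  one : R

namespace MulRingOps

variable {R : Type*}

/-- The multiring axioms. -/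
structure IsMulRing (S : MulRingOps R) : Prop where
  add_nonempty : ∀ a b, (S.add a b).Nonempty
  add_comm : ∀ a b, S.add a b = S.add b a
  rev_left : ∀ {x y z}, z ∈ S.add x y → x ∈ S.add z (S.neg y)
  rev_right : ∀ {x y z}, z ∈ S.add x y → y ∈ S.add (S.neg x) z
  zero_add : ∀ x y, y ∈ S.add S.zero x ↔ x = y
  add_assoc : ∀ x y z : R,
    (⋃ w ∈ S.add y z, S.add x w) = (⋃ t ∈ S.add x y, S.add t z)
  mul_comm : ∀ a b, S.mul a b = S.mul b a
  mul_assoc : ∀ a b c, S.mul (S.mul a b) c = S.mul a (S.mul b c)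
  one_mul : ∀ a, S.mul S.one a = a
  mul_zero : ∀ a, S.mul a S.zero = S.zero
  distrib : ∀ {a b c : R} (d : R), c ∈ S.add a b →
    S.mul c d ∈ S.add (S.mul a d) (S.mul b d)

/-- A hyperfield: a multiring with `0 ≠ 1` in which every nonzero element is invertible. -/
structure IsHyperfield (S : MulRingOps R) extends IsMulRing S : Prop where
  zero_ne_one : S.zero ≠ S.one
  exists_inv : ∀ a, a ≠ S.zero → ∃ b, S.mul a b = S.one

/-- A hyperfield is hyperbolic when `1 - 1` is everything. -/
def IsHyperbolic (S : MulRingOps R) : Prop :=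
  S.add S.one (S.neg S.one) = Set.univ

/-- Morphisms of multirings. -/
def IsHom {A B : Type*} (S : MulRingOps A) (T : MulRingOps B) (f : A → B) : Prop :=
  (∀ {a b c}, c ∈ S.add a b → f c ∈ T.add (f a) (f b)) ∧
  (∀ a, f (S.neg a) = T.neg (f a)) ∧
  f S.zero = T.zero ∧
  (∀ a b, f (S.mul a b) = T.mul (f a) (f b)) ∧
  f S.one = T.one

end MulRingOps

namespace MulRingOps

variable {A : Type*}

/-- The Marshall relation: `a ~ b` iff `as = bt` for some `s, t ∈ S`. -/
def mrel (S : MulRingOps A) (Sub : Set A) (a b : A) : Prop :=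
  ∃ s ∈ Sub, ∃ t ∈ Sub, S.mul a s = S.mul b t

/-- The carrier of the Marshall quotient `A/ₘS`. -/
abbrev MQuot (S : MulRingOps A) (Sub : Set A) := Quot (mrel S Sub)

/-- The multivalued sum on the Marshall quotient:
`ā + b̄ = {c̄ : cv ∈ as + bt for some s,t,v ∈ S}`. -/
def mAdd (S : MulRingOps A) (Sub : Set A) (x y : MQuot S Sub) : Set (MQuot S Sub) :=
  {z | ∃ a b c : A, x = Quot.mk _ a ∧ y = Quot.mk _ b ∧ z = Quot.mk _ c ∧
    ∃ s ∈ Sub, ∃ t ∈ Sub, ∃ v ∈ Sub, S.mul c v ∈ S.add (S.mul a s) (S.mul b t)}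

/-- `MSpec S Sub ops` says that `ops` is a multiring-operations structure on `A/ₘS`
implementing Marshall's quotient operations. -/
def MSpec (S : MulRingOps A) (Sub : Set A) (ops : MulRingOps (MQuot S Sub)) : Prop :=
  ops.add = mAdd S Sub ∧
  (∀ a b : A, ops.mul (Quot.mk _ a) (Quot.mk _ b) = Quot.mk _ (S.mul a b)) ∧
  (∀ a : A, ops.neg (Quot.mk _ a) = Quot.mk _ (S.neg a)) ∧
  ops.zero = Quot.mk _ S.zero ∧
  ops.one = Quot.mk _ S.one

end MulRingOps

open MulRingOps in
/-- Marshall's quotient `A/ₘS` of a multiring `A` by a multiplicative subset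
`S` with `1 ∈ S` is a multiring, and the canonical projection is a multiring morphism. -/
theorem marshall_quotient_isMulRing {A : Type*} (S : MulRingOps A) (h : S.IsMulRing)
    (Sub : Set A) (hone : S.one ∈ Sub)
    (hmul : ∀ a ∈ Sub, ∀ b ∈ Sub, S.mul a b ∈ Sub) :
    ∃ ops : MulRingOps (MQuot S Sub), MSpec S Sub ops ∧ ops.IsMulRing ∧
      IsHom S ops (Quot.mk _) := by
  classical
  -- basic multiplicative lemmas
  have mulLC : ∀ a b c : A, S.mul a (S.mul b c) = S.mul b (S.mul a c) := fun a b c => by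
    rw [← h.mul_assoc, h.mul_comm a b, h.mul_assoc]
  have mul1 : ∀ a : A, S.mul a S.one = a := fun a => (h.mul_comm a S.one).trans (h.one_mul a)
  have zmul : ∀ a : A, S.mul S.zero a = S.zero := fun a => (h.mul_comm _ _).trans (h.mul_zero a)
  have negmul : ∀ a b : A, S.neg (S.mul a b) = S.mul (S.neg a) b := by
    intro a b
    have h0 : S.zero ∈ S.add a (S.neg a) := h.rev_left ((h.zero_add a a).mpr rfl)
    have h2 := h.distrib b h0
    rw [zmul b] at h2
    have h3 := h.rev_right h2
    rw [h.add_comm] at h3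
    exact (h.zero_add _ _).mp h3
  -- mrel is an equivalence relation
  have mrefl : ∀ a : A, mrel S Sub a a := fun a => ⟨S.one, hone, S.one, hone, rfl⟩
  have msymm : ∀ {a b : A}, mrel S Sub a b → mrel S Sub b a := by
    rintro a b ⟨s, hs, t, ht, he⟩; exact ⟨t, ht, s, hs, he.symm⟩
  have mtrans : ∀ {a b c : A}, mrel S Sub a b → mrel S Sub b c → mrel S Sub a c := by
    rintro a b c ⟨s, hs, t, ht, h₁⟩ ⟨s', hs', t', ht', h₂⟩
    refine ⟨S.mul s s', hmul _ hs _ hs', S.mul t' t, hmul _ ht' _ ht, ?_⟩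
    calc S.mul a (S.mul s s') = S.mul (S.mul a s) s' := (h.mul_assoc ..).symm
      _ = S.mul (S.mul b t) s' := by rw [h₁]
      _ = S.mul (S.mul b s') t := by simp only [h.mul_assoc, h.mul_comm, mulLC]
      _ = S.mul (S.mul c t') t := by rw [h₂]
      _ = S.mul c (S.mul t' t) := h.mul_assoc ..
  have qexact : ∀ {a b : A}, Quot.mk (mrel S Sub) a = Quot.mk (mrel S Sub) b →
      mrel S Sub a b := by
    intro a b hab
    have hab' := Quot.eqvGen_exact hab
    clear hab
    induction hab' with
    | rel _ _ hxy => exact hxy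
    | refl x => exact mrefl x
    | symm _ _ _ ih => exact msymm ih
    | trans _ _ _ _ _ ih₁ ih₂ => exact mtrans ih₁ ih₂
  have scale : ∀ {x y z : A} (d : A), z ∈ S.add x y →
      S.mul z d ∈ S.add (S.mul x d) (S.mul y d) := fun d hz => h.distrib d hz
  -- characterisation of membership in the quotient sum
  have memQ : ∀ a b c : A, Quot.mk (mrel S Sub) c ∈ mAdd S Sub (Quot.mk _ a) (Quot.mk _ b) ↔
      ∃ s ∈ Sub, ∃ t ∈ Sub, ∃ v ∈ Sub, S.mul c v ∈ S.add (S.mul a s) (S.mul b t) := by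
    intro a b c
    constructor
    · rintro ⟨a', b', c', ha, hb, hc, s, hs, t, ht, v, hv, hmem⟩
      obtain ⟨s₀, hs₀, t₀, ht₀, ha'⟩ := qexact ha
      obtain ⟨s₁, hs₁, t₁, ht₁, hb'⟩ := qexact hb
      obtain ⟨s₂, hs₂, t₂, ht₂, hc'⟩ := qexact hc
      have h2 := scale (S.mul t₀ (S.mul t₁ t₂)) hmem
      have E1 : S.mul a (S.mul s (S.mul s₀ (S.mul t₁ t₂)))
          = S.mul (S.mul a' s) (S.mul t₀ (S.mul t₁ t₂)) := by
        calc S.mul a (S.mul s (S.mul s₀ (S.mul t₁ t₂)))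
            = S.mul (S.mul a s₀) (S.mul s (S.mul t₁ t₂)) := by
              simp only [h.mul_assoc, h.mul_comm, mulLC]
          _ = S.mul (S.mul a' t₀) (S.mul s (S.mul t₁ t₂)) := by rw [ha']
          _ = _ := by simp only [h.mul_assoc, h.mul_comm, mulLC]
      have E2 : S.mul b (S.mul t (S.mul s₁ (S.mul t₀ t₂)))
          = S.mul (S.mul b' t) (S.mul t₀ (S.mul t₁ t₂)) := by
        calc S.mul b (S.mul t (S.mul s₁ (S.mul t₀ t₂)))
            = S.mul (S.mul b s₁) (S.mul t (S.mul t₀ t₂)) := by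
              simp only [h.mul_assoc, h.mul_comm, mulLC]
          _ = S.mul (S.mul b' t₁) (S.mul t (S.mul t₀ t₂)) := by rw [hb']
          _ = _ := by simp only [h.mul_assoc, h.mul_comm, mulLC]
      have E3 : S.mul c (S.mul v (S.mul s₂ (S.mul t₀ t₁)))
          = S.mul (S.mul c' v) (S.mul t₀ (S.mul t₁ t₂)) := by
        calc S.mul c (S.mul v (S.mul s₂ (S.mul t₀ t₁)))
            = S.mul (S.mul c s₂) (S.mul v (S.mul t₀ t₁)) := by
              simp only [h.mul_assoc, h.mul_comm, mulLC]
          _ = S.mul (S.mul c' t₂) (S.mul v (S.mul t₀ t₁)) := by rw [hc']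
          _ = _ := by simp only [h.mul_assoc, h.mul_comm, mulLC]
      refine ⟨S.mul s (S.mul s₀ (S.mul t₁ t₂)),
        hmul _ hs _ (hmul _ hs₀ _ (hmul _ ht₁ _ ht₂)),
        S.mul t (S.mul s₁ (S.mul t₀ t₂)),
        hmul _ ht _ (hmul _ hs₁ _ (hmul _ ht₀ _ ht₂)),
        S.mul v (S.mul s₂ (S.mul t₀ t₁)),
        hmul _ hv _ (hmul _ hs₂ _ (hmul _ ht₀ _ ht₁)), ?_⟩
      rw [E1, E2, E3]
      exact h2
    · rintro ⟨s, hs, t, ht, v, hv, hmem⟩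
      exact ⟨a, b, c, rfl, rfl, rfl, s, hs, t, ht, v, hv, hmem⟩
  -- commutativity of the quotient sum
  have qaddcomm : ∀ x y : MQuot S Sub, mAdd S Sub x y = mAdd S Sub y x := by
    intro x y; ext u
    constructor <;> rintro ⟨a, b, c, ha, hb, hc, s, hs, t, ht, v, hv, hmem⟩ <;>
      exact ⟨b, a, c, hb, ha, hc, t, ht, s, hs, v, hv, by rwa [h.add_comm]⟩
  -- associativity helper at the level of A
  have assocS : ∀ {p q r w e : A}, q ∈ S.add r w → e ∈ S.add p q →
      ∃ g, g ∈ S.add p r ∧ e ∈ S.add g w := by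
    intro p q r w e hq he
    have hmem : e ∈ ⋃ u ∈ S.add r w, S.add p u := Set.mem_biUnion hq he
    rw [h.add_assoc] at hmem
    simpa only [Set.mem_iUnion, exists_prop] using hmem
  -- one-sided associativity at the quotient level
  have auxsub : ∀ x y z : MQuot S Sub,
      (⋃ w ∈ mAdd S Sub y z, mAdd S Sub x w) ⊆ ⋃ t ∈ mAdd S Sub x y, mAdd S Sub t z := by
    intro x y z u hu
    obtain ⟨a, rfl⟩ := Quot.exists_rep x
    obtain ⟨b, rfl⟩ := Quot.exists_rep y
    obtain ⟨c, rfl⟩ := Quot.exists_rep z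
    obtain ⟨e, rfl⟩ := Quot.exists_rep u
    simp only [Set.mem_iUnion, exists_prop] at hu ⊢
    obtain ⟨w, hw, hew⟩ := hu
    obtain ⟨d, rfl⟩ := Quot.exists_rep w
    rw [memQ] at hw hew
    obtain ⟨s, hs, t, ht, v, hv, h₁⟩ := hw
    obtain ⟨s', hs', t', ht', v', hv', h₂⟩ := hew
    have h₁' := scale t' h₁
    have h₂' := scale v h₂
    have hd : S.mul (S.mul d t') v = S.mul (S.mul d v) t' := by
      simp only [h.mul_assoc, h.mul_comm, mulLC]
    rw [hd] at h₂'
    obtain ⟨g, hg, heg⟩ := assocS h₁' h₂'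
    refine ⟨Quot.mk _ g,
      (memQ a b g).mpr ⟨S.mul s' v, hmul _ hs' _ hv, S.mul s t', hmul _ hs _ ht',
        S.one, hone, ?_⟩,
      (memQ g c e).mpr ⟨S.one, hone, S.mul t t', hmul _ ht _ ht',
        S.mul v' v, hmul _ hv' _ hv, ?_⟩⟩
    · rw [mul1, ← h.mul_assoc, ← h.mul_assoc]; exact hg
    · rw [mul1, ← h.mul_assoc, ← h.mul_assoc]; exact heg
  -- compatibility of multiplication and negation with mrel
  have mulcompat : ∀ {a a' : A} (b : A), mrel S Sub a a' →
      mrel S Sub (S.mul a b) (S.mul a' b) := by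
    rintro a a' b ⟨s, hs, t, ht, he⟩
    refine ⟨s, hs, t, ht, ?_⟩
    calc S.mul (S.mul a b) s = S.mul (S.mul a s) b := by
          simp only [h.mul_assoc, h.mul_comm, mulLC]
      _ = S.mul (S.mul a' t) b := by rw [he]
      _ = S.mul (S.mul a' b) t := by simp only [h.mul_assoc, h.mul_comm, mulLC]
  let qmul : MQuot S Sub → MQuot S Sub → MQuot S Sub :=
    Quot.lift (fun a => Quot.lift (fun b => Quot.mk (mrel S Sub) (S.mul a b))
        (fun b b' hb => Quot.sound (by
          rw [h.mul_comm a b, h.mul_comm a b']; exact mulcompat a hb)))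
      (fun a a' ha => funext fun q => by
        induction q using Quot.ind with
        | _ b => exact Quot.sound (mulcompat b ha))
  let qneg : MQuot S Sub → MQuot S Sub :=
    Quot.lift (fun a => Quot.mk (mrel S Sub) (S.neg a))
      (by rintro a a' ⟨s, hs, t, ht, he⟩
          exact Quot.sound ⟨s, hs, t, ht, by rw [← negmul, ← negmul, he]⟩)
  have qmul_mk : ∀ a b : A, qmul (Quot.mk _ a) (Quot.mk _ b) = Quot.mk _ (S.mul a b) :=
    fun _ _ => rfl
  refine ⟨⟨mAdd S Sub, qmul, qneg, Quot.mk _ S.zero, Quot.mk _ S.one⟩,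
    ⟨rfl, fun a b => rfl, fun a => rfl, rfl, rfl⟩, ?_, ?_⟩
  · refine ⟨?_, ?_, ?_, ?_, ?_, ?_, ?_, ?_, ?_, ?_, ?_⟩
    · -- add_nonempty
      intro x y
      obtain ⟨a, rfl⟩ := Quot.exists_rep x
      obtain ⟨b, rfl⟩ := Quot.exists_rep y
      obtain ⟨c, hc⟩ := h.add_nonempty a b
      exact ⟨Quot.mk _ c, (memQ a b c).mpr ⟨S.one, hone, S.one, hone, S.one, hone,
        h.distrib S.one hc⟩⟩
    · -- add_comm
      exact qaddcomm
    · -- rev_left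
      intro x y z hz
      obtain ⟨a, rfl⟩ := Quot.exists_rep x
      obtain ⟨b, rfl⟩ := Quot.exists_rep y
      obtain ⟨c, rfl⟩ := Quot.exists_rep z
      obtain ⟨s, hs, t, ht, v, hv, hmem⟩ := (memQ a b c).mp hz
      have h1 := h.rev_left hmem
      rw [negmul] at h1
      exact (memQ c (S.neg b) a).mpr ⟨v, hv, t, ht, s, hs, h1⟩
    · -- rev_right
      intro x y z hz
      obtain ⟨a, rfl⟩ := Quot.exists_rep x
      obtain ⟨b, rfl⟩ := Quot.exists_rep y
      obtain ⟨c, rfl⟩ := Quot.exists_rep z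
      obtain ⟨s, hs, t, ht, v, hv, hmem⟩ := (memQ a b c).mp hz
      have h1 := h.rev_right hmem
      rw [negmul] at h1
      exact (memQ (S.neg a) c b).mpr ⟨s, hs, v, hv, t, ht, h1⟩
    · -- zero_add
      intro x y
      obtain ⟨a, rfl⟩ := Quot.exists_rep x
      obtain ⟨b, rfl⟩ := Quot.exists_rep y
      constructor
      · intro hb
        obtain ⟨s, hs, t, ht, v, hv, hmem⟩ := (memQ S.zero a b).mp hb
        rw [zmul] at hmem
        exact Quot.sound ⟨t, ht, v, hv, (h.zero_add _ _).mp hmem⟩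
      · intro he
        rw [← he]
        refine (memQ S.zero a a).mpr ⟨S.one, hone, S.one, hone, S.one, hone, ?_⟩
        rw [zmul]
        exact (h.zero_add _ _).mpr rfl
    · -- add_assoc
      intro x y z
      apply Set.Subset.antisymm
      · exact auxsub x y z
      · intro u hu
        simp only [Set.mem_iUnion, exists_prop] at hu ⊢
        obtain ⟨w, hw, huw⟩ := hu
        rw [qaddcomm] at hw huw
        have hu' : u ∈ ⋃ t ∈ mAdd S Sub z y, mAdd S Sub t x :=
          auxsub z y x (Set.mem_biUnion hw huw)
        simp only [Set.mem_iUnion, exists_prop] at hu'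
        obtain ⟨g, hg, hug⟩ := hu'
        rw [qaddcomm] at hg hug
        exact ⟨g, hg, hug⟩
    · -- mul_comm
      intro x y
      obtain ⟨a, rfl⟩ := Quot.exists_rep x
      obtain ⟨b, rfl⟩ := Quot.exists_rep y
      exact congrArg (Quot.mk (mrel S Sub)) (h.mul_comm a b)
    · -- mul_assoc
      intro x y z
      obtain ⟨a, rfl⟩ := Quot.exists_rep x
      obtain ⟨b, rfl⟩ := Quot.exists_rep y
      obtain ⟨c, rfl⟩ := Quot.exists_rep z
      show qmul (qmul (Quot.mk _ a) (Quot.mk _ b)) (Quot.mk _ c)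
        = qmul (Quot.mk _ a) (qmul (Quot.mk _ b) (Quot.mk _ c))
      rw [qmul_mk, qmul_mk, h.mul_assoc]
    · -- one_mul
      intro x
      obtain ⟨a, rfl⟩ := Quot.exists_rep x
      exact congrArg (Quot.mk (mrel S Sub)) (h.one_mul a)
    · -- mul_zero
      intro x
      obtain ⟨a, rfl⟩ := Quot.exists_rep x
      exact congrArg (Quot.mk (mrel S Sub)) (h.mul_zero a)
    · -- distrib
      intro x y z w hz
      obtain ⟨a, rfl⟩ := Quot.exists_rep x
      obtain ⟨b, rfl⟩ := Quot.exists_rep y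
      obtain ⟨c, rfl⟩ := Quot.exists_rep z
      obtain ⟨d, rfl⟩ := Quot.exists_rep w
      obtain ⟨s, hs, t, ht, v, hv, hmem⟩ := (memQ a b c).mp hz
      have hd := scale d hmem
      refine (memQ (S.mul a d) (S.mul b d) (S.mul c d)).mpr ⟨s, hs, t, ht, v, hv, ?_⟩
      simp only [h.mul_assoc, h.mul_comm, mulLC] at hd ⊢
      exact hd
  · -- IsHom
    exact ⟨fun {a b c} hc => ⟨a, b, c, rfl, rfl, rfl, S.one, hone, S.one, hone,
        S.one, hone, h.distrib S.one hc⟩,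
      fun a => rfl, rfl, fun a b => rfl, rfl⟩
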